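/- For integers 1 ≤ m ≤ n, the sum over k from m to n of [n,k] * {k,m} equals (n!/m!) * C(n-1, m-1), the Lah number. -/

import Mathlib

open Finset

/-- Unsigned Stirling numbers of the first kind. -/
def stirling1 : ℕ → ℕ → ℕ
  | 0, 0 => 1
  | 0, _ + 1 => 0
  | _ + 1, 0 => 0
  | n + 1, k + 1 => n * stirling1 n (k + 1) + stirling1 n k

/-- Stirling numbers of the second kind. -/
def stirling2 : ℕ → ℕ → ℕ
  | 0, 0 => 1
  | 0, _ + 1 => 0
  | _ + 1, 0 => 0
  | n + 1, k + 1 => (k + 1) * stirling2 n (k + 1) + stirling2 n k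

/-- Generalized binomial coefficient `C(x, r) = x(x-1)⋯(x-r+1)/r!` in a ℚ-algebra. -/
noncomputable def gchoose {R : Type*} [CommRing R] [Algebra ℚ R] (x : R) (r : ℕ) : R :=
  algebraMap ℚ R ((r.factorial : ℚ)⁻¹) * ∏ i ∈ Finset.range r, (x - i)

lemma stirling2_eq_zero_of_lt : ∀ k m : ℕ, k < m → stirling2 k m = 0
  | _, 0, h => absurd h (by omega)
  | 0, m + 1, _ => rfl
  | k + 1, m + 1, h => by
    show (m + 1) * stirling2 k (m + 1) + stirling2 k m = 0
    rw [stirling2_eq_zero_of_lt k (m + 1) (by omega),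
      stirling2_eq_zero_of_lt k m (by omega)]; ring

lemma stirling1_eq_zero_of_lt : ∀ n k : ℕ, n < k → stirling1 n k = 0
  | _, 0, h => absurd h (by omega)
  | 0, k + 1, _ => rfl
  | n + 1, k + 1, h => by
    show n * stirling1 n (k + 1) + stirling1 n k = 0
    rw [stirling1_eq_zero_of_lt n (k + 1) (by omega),
      stirling1_eq_zero_of_lt n k (by omega)]; ring

/-- full-range sum -/
def fsum (n m : ℕ) : ℕ := ∑ k ∈ Finset.range (n + 1), stirling1 n k * stirling2 k m

lemma fsum_zero_right : ∀ n, fsum (n + 1) 0 = 0 := by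
  intro n
  unfold fsum
  apply Finset.sum_eq_zero
  intro k hk
  match k with
  | 0 => show stirling1 (n+1) 0 * _ = 0; rfl
  | k + 1 => show stirling1 (n+1) (k+1) * stirling2 (k+1) 0 = 0; rw [show stirling2 (k+1) 0 = 0 from rfl]; ring

lemma fsum_eq_zero_of_lt (n m : ℕ) (h : n < m) : fsum n m = 0 := by
  unfold fsum
  apply Finset.sum_eq_zero
  intro k hk
  simp only [Finset.mem_range] at hk
  rw [stirling2_eq_zero_of_lt k m (by omega)]; ring

lemma fsum_rec (n m : ℕ) :
    fsum (n + 1) (m + 1) = (n + m + 1) * fsum n (m + 1) + fsum n m := by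
  have h1 : fsum (n + 1) (m + 1)
      = ∑ k ∈ Finset.range (n + 1), stirling1 (n + 1) (k + 1) * stirling2 (k + 1) (m + 1) := by
    unfold fsum
    rw [Finset.sum_range_succ']
    rw [show stirling1 (n + 1) 0 = 0 from rfl]
    ring
  have hA : ∑ k ∈ Finset.range (n + 1), stirling1 n (k + 1) * stirling2 (k + 1) (m + 1)
      = fsum n (m + 1) := by
    rw [Finset.sum_range_succ, stirling1_eq_zero_of_lt n (n + 1) (by omega)]
    unfold fsum
    rw [Finset.sum_range_succ']
    rw [show stirling2 0 (m + 1) = 0 from rfl]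
    ring
  have expand : ∀ k, stirling1 (n + 1) (k + 1) * stirling2 (k + 1) (m + 1)
      = n * (stirling1 n (k + 1) * stirling2 (k + 1) (m + 1))
        + ((m + 1) * (stirling1 n k * stirling2 k (m + 1)) + stirling1 n k * stirling2 k m) := by
    intro k
    show (n * stirling1 n (k + 1) + stirling1 n k) * stirling2 (k + 1) (m + 1) = _
    rw [show stirling2 (k + 1) (m + 1) = (m + 1) * stirling2 k (m + 1) + stirling2 k m from rfl]
    ring
  rw [h1]
  simp only [expand]
  rw [Finset.sum_add_distrib, Finset.sum_add_distrib, ← Finset.mul_sum, ← Finset.mul_sum, hA]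
  unfold fsum
  ring

lemma lahnat (n m : ℕ) : (n + 2) * Nat.choose (n + 1) (m + 1)
    = (n + m + 3) * Nat.choose n (m + 1) + (m + 2) * Nat.choose n m := by
  rw [Nat.choose_succ_succ]
  rcases le_or_gt m n with h | h
  · have h2 := Nat.choose_succ_right_eq n m
    zify [h] at h2 ⊢
    linear_combination -h2
  · rw [Nat.choose_eq_zero_of_lt h, Nat.choose_eq_zero_of_lt (show n < m + 1 by omega)]
    ring

lemma fsum_formula : ∀ n m : ℕ, ((m + 1).factorial : ℚ) * fsum (n + 1) (m + 1)
    = (n + 1).factorial * n.choose m := by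
  intro n
  induction n with
  | zero =>
    intro m
    match m with
    | 0 =>
      have h : fsum 1 1 = 1 := by unfold fsum; simp [Finset.sum_range_succ, stirling1, stirling2]
      rw [h]; norm_num
    | m + 1 =>
      rw [fsum_eq_zero_of_lt 1 (m + 2) (by omega), Nat.choose_eq_zero_of_lt (by omega)]
      norm_num
  | succ n ih =>
    intro m
    match m with
    | 0 =>
      simp only [show n + 1 + 1 = n + 2 from rfl]
      have h1 : (fsum (n + 2) 1 : ℚ) = ((n : ℚ) + 2) * fsum (n + 1) 1 := by
        have h := fsum_rec (n + 1) 0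
        rw [fsum_zero_right] at h
        push_cast [h]; ring
      have h3 : ((n + 2).factorial : ℚ) = ((n : ℚ) + 2) * (n + 1).factorial := by
        rw [Nat.factorial_succ (n + 1)]; push_cast; ring
      have ih0 := ih 0
      simp only [Nat.choose_zero_right, Nat.cast_one, mul_one] at ih0 ⊢
      rw [h1, h3]
      linear_combination ((n : ℚ) + 2) * ih0
    | m + 1 =>
      simp only [show n + 1 + 1 = n + 2 from rfl, show m + 1 + 1 = m + 2 from rfl]
      have h1 : (fsum (n + 2) (m + 2) : ℚ)
          = ((n : ℚ) + m + 3) * fsum (n + 1) (m + 2) + fsum (n + 1) (m + 1) := by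
        have h := fsum_rec (n + 1) (m + 1)
        push_cast [h]; ring
      have h2 : ((m + 2).factorial : ℚ) = ((m : ℚ) + 2) * (m + 1).factorial := by
        rw [Nat.factorial_succ (m + 1)]; push_cast; ring
      have h3 : ((n + 2).factorial : ℚ) = ((n : ℚ) + 2) * (n + 1).factorial := by
        rw [Nat.factorial_succ (n + 1)]; push_cast; ring
      have keyQ : ((n : ℚ) + 2) * ((n + 1).choose (m + 1))
          = ((n : ℚ) + m + 3) * (n.choose (m + 1)) + ((m : ℚ) + 2) * (n.choose m) := by
        have h : (((n + 2) * Nat.choose (n + 1) (m + 1) : ℕ) : ℚ)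
            = (((n + m + 3) * Nat.choose n (m + 1) + (m + 2) * Nat.choose n m : ℕ) : ℚ) := by
          exact_mod_cast congrArg (Nat.cast : ℕ → ℚ) (lahnat n m)
        push_cast at h
        linear_combination h
      have ihA := ih (m + 1)
      have ihB := ih m
      simp only [show m + 1 + 1 = m + 2 from rfl] at ihA
      linear_combination ((m + 2).factorial : ℚ) * h1 + ((n : ℚ) + m + 3) * ihA
        + (fsum (n + 1) (m + 1) : ℚ) * h2 + ((m : ℚ) + 2) * ihB
        - ((n + 1).factorial : ℚ) * keyQ - (((n + 1).choose (m + 1) : ℕ) : ℚ) * h3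

theorem stmt1 (m n : ℕ) (hm : 1 ≤ m) (hmn : m ≤ n) :
    ∑ k ∈ Finset.Icc m n, (stirling1 n k * stirling2 k m : ℚ) =
      (n.factorial : ℚ) / m.factorial * (n - 1).choose (m - 1) := by
  obtain ⟨m', rfl⟩ : ∃ m', m = m' + 1 := ⟨m - 1, by omega⟩
  obtain ⟨n', rfl⟩ : ∃ n', n = n' + 1 := ⟨n - 1, by omega⟩
  have hsum : ∑ k ∈ Finset.Icc (m' + 1) (n' + 1),
      (stirling1 (n' + 1) k * stirling2 k (m' + 1) : ℚ) = (fsum (n' + 1) (m' + 1) : ℚ) := by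
    unfold fsum
    push_cast
    apply Finset.sum_subset
    · intro k hk
      simp only [Finset.mem_Icc] at hk
      simp only [Finset.mem_range]
      omega
    · intro k hk hk2
      simp only [Finset.mem_Icc] at hk2
      simp only [Finset.mem_range] at hk
      rw [stirling2_eq_zero_of_lt k (m' + 1) (by omega)]
      push_cast
      ring
  rw [hsum]
  have h := fsum_formula n' m'
  have hne : ((m' + 1).factorial : ℚ) ≠ 0 := by positivity
  simp only [Nat.add_sub_cancel]
  field_simp
  linear_combination h
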